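/- Let g : ℝⁿ → ℝⁿ be a ρ-averaged operator for some ρ ∈ (0,1) with a nonempty fixed-point set. Then for every x, ‖f(g^[k](x))‖ → 0 as k → ∞, where f(x) = g(x) - x. -/

import Mathlib

open Filter

lemma convex_norm_sq_id {E : Type*} [NormedAddCommGroup E] [InnerProductSpace ℝ E]
    (u v : E) (ρ : ℝ) :
    ‖(1-ρ)•u + ρ•v‖^2 = (1-ρ)*‖u‖^2 + ρ*‖v‖^2 - ρ*(1-ρ)*‖u-v‖^2 := by
  have h1 : ‖(1-ρ)•u + ρ•v‖^2
      = ‖(1-ρ)•u‖^2 + 2 * inner ℝ ((1-ρ)•u) (ρ•v) + ‖ρ•v‖^2 := norm_add_sq_real _ _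
  have h2 : ‖u - v‖^2 = ‖u‖^2 - 2 * inner ℝ u v + ‖v‖^2 := norm_sub_sq_real _ _
  rw [h1, h2, real_inner_smul_left, real_inner_smul_right, norm_smul, norm_smul,
    mul_pow, mul_pow]
  simp only [Real.norm_eq_abs, sq_abs]
  ring

theorem stmt_2 (n : ℕ) (g : EuclideanSpace ℝ (Fin n) → EuclideanSpace ℝ (Fin n))
    (ρ : ℝ) (hρ : ρ ∈ Set.Ioo (0 : ℝ) 1)
    (hav : ∃ R : EuclideanSpace ℝ (Fin n) → EuclideanSpace ℝ (Fin n),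
      (∀ x y, ‖R x - R y‖ ≤ ‖x - y‖) ∧ ∀ x, g x = (1 - ρ) • x + ρ • R x)
    (hfix : ∃ x, g x = x)
    (f : EuclideanSpace ℝ (Fin n) → EuclideanSpace ℝ (Fin n))
    (hf : ∀ x, f x = g x - x) :
    ∀ x, Filter.Tendsto (fun k => ‖f (g^[k] x)‖) Filter.atTop (nhds 0) := by
  obtain ⟨R, hR, hg⟩ := hav
  obtain ⟨p, hp⟩ := hfix
  obtain ⟨hρ0, hρ1⟩ := hρ
  have hρ0' : (0:ℝ) < 1 - ρ := by linarith
  -- R fixes p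
  have hRp : R p = p := by
    have h := hg p
    rw [hp] at h
    have h' : (1-ρ)•p + ρ•R p = (1-ρ)•p + ρ•p := by
      rw [← h]; module
    exact smul_right_injective _ (ne_of_gt hρ0) (add_left_cancel h')
  -- key inequality
  have key : ∀ y, ‖g y - p‖^2 + ((1-ρ)/ρ) * ‖f y‖^2 ≤ ‖y - p‖^2 := by
    intro y
    have hgy : g y - p = (1-ρ) • (y - p) + ρ • (R y - p) := by
      rw [hg y]
      module
    have hid := convex_norm_sq_id (y - p) (R y - p) ρ
    have hRle : ‖R y - p‖ ≤ ‖y - p‖ := by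
      have := hR y p; rwa [hRp] at this
    have hfy : ‖f y‖^2 = ρ^2 * ‖R y - y‖^2 := by
      have : f y = ρ • (R y - y) := by
        rw [hf y, hg y]; module
      rw [this, norm_smul, mul_pow]
      simp [Real.norm_eq_abs, sq_abs]
    have hsub : (y - p) - (R y - p) = -(R y - y) := by abel
    have hnsub : ‖(y - p) - (R y - p)‖ = ‖R y - y‖ := by rw [hsub, norm_neg]
    rw [hgy, hid, hnsub, hfy]
    have h1 : ρ * ‖R y - p‖^2 ≤ ρ * ‖y - p‖^2 := by
      apply mul_le_mul_of_nonneg_left _ (le_of_lt hρ0)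
      exact pow_le_pow_left₀ (norm_nonneg _) hRle 2
    have h2 : (1-ρ)/ρ * (ρ^2 * ‖R y - y‖^2) = ρ*(1-ρ)*‖R y - y‖^2 := by
      field_simp
    rw [h2]
    nlinarith [norm_nonneg (R y - y)]
  intro x
  set a : ℕ → ℝ := fun k => ‖g^[k] x - p‖^2 with ha
  have hstep : ∀ k, a (k+1) + ((1-ρ)/ρ) * ‖f (g^[k] x)‖^2 ≤ a k := by
    intro k
    have := key (g^[k] x)
    simpa [ha, Function.iterate_succ_apply'] using this
  have hanti : Antitone a := by
    apply antitone_nat_of_succ_le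
    intro k
    have := hstep k
    have hnn : 0 ≤ ((1-ρ)/ρ) * ‖f (g^[k] x)‖^2 :=
      mul_nonneg (le_of_lt (div_pos hρ0' hρ0)) (sq_nonneg _)
    linarith
  have hbdd : BddBelow (Set.range a) := ⟨0, by rintro _ ⟨k, rfl⟩; exact sq_nonneg _⟩
  have hconv : Tendsto a atTop (nhds (⨅ k, a k)) := tendsto_atTop_ciInf hanti hbdd
  have hdiff : Tendsto (fun k => a k - a (k+1)) atTop (nhds 0) := by
    have h2 : Tendsto (fun k => a (k+1)) atTop (nhds (⨅ k, a k)) :=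
      hconv.comp (tendsto_add_atTop_nat 1)
    simpa using hconv.sub h2
  have hsq : Tendsto (fun k => ‖f (g^[k] x)‖^2) atTop (nhds 0) := by
    apply squeeze_zero (fun k => sq_nonneg _) (g := fun k => (ρ/(1-ρ)) * (a k - a (k+1)))
    · intro k
      have h1 := hstep k
      have h2 : ((1-ρ)/ρ) * ‖f (g^[k] x)‖^2 ≤ a k - a (k+1) := by linarith
      have h3 := mul_le_mul_of_nonneg_left h2 (le_of_lt (div_pos hρ0 hρ0'))
      have hc : ρ/(1-ρ) * (((1-ρ)/ρ)*‖f (g^[k] x)‖^2) = ‖f (g^[k] x)‖^2 := by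
        field_simp
      rw [hc] at h3
      exact h3
    · simpa using hdiff.const_mul (ρ/(1-ρ))
  have : Tendsto (fun k => Real.sqrt (‖f (g^[k] x)‖^2)) atTop (nhds (Real.sqrt 0)) :=
    (Real.continuous_sqrt.tendsto 0).comp hsq
  simpa [Real.sqrt_sq (norm_nonneg _)] using this
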